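/- Let G = (V, E) be a cactus graph containing at least two cycles (equivalently, G is connected with |E| ≥ |V| + 1). Then the tree cover number of G satisfies T(G) ≥ 3. -/

import Mathlib

/-- A cactus graph: a simple connected graph in which every edge belongs to at
most one cycle, i.e. any two cycles sharing a common edge have the same edge set. -/
def IsCactus {n : ℕ} (G : SimpleGraph (Fin n)) : Prop :=
  G.Connected ∧
    ∀ (u w : Fin n) (p : G.Walk u u) (q : G.Walk w w), p.IsCycle → q.IsCycle →
      ∀ e ∈ p.edges, e ∈ q.edges → ∀ e', (e' ∈ p.edges ↔ e' ∈ q.edges)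

/-- The tree cover number of `G`: the minimum number of pairwise vertex-disjoint
induced subgraphs of `G`, each of which is a tree, whose vertex sets cover all
vertices of `G`. -/
noncomputable def treeCoverNumber {n : ℕ} (G : SimpleGraph (Fin n)) : ℕ :=
  sInf { k : ℕ | ∃ 𝒯 : Finset (Set (Fin n)), 𝒯.card = k ∧
    (∀ S ∈ 𝒯, (G.induce S).IsTree) ∧
    (𝒯 : Set (Set (Fin n))).PairwiseDisjoint id ∧
    (∀ v : Fin n, ∃ S ∈ 𝒯, v ∈ S) }

open SimpleGraph

lemma aux_isTree_singleton {n : ℕ} (G : SimpleGraph (Fin n)) (v : Fin n) :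
    (G.induce ({v} : Set (Fin n))).IsTree := by
  constructor
  · constructor
    intro a b
    rw [Subsingleton.elim a b]
  · intro u c hc
    cases c with
    | nil => exact hc.ne_nil rfl
    | cons h q => exact h.ne (Subsingleton.elim _ _)

/-- membership in an edge of a walk gives membership in its support -/
lemma aux_mem_support_of_mem_edges {V : Type*} {G : SimpleGraph V} {u w : V}
    (p : G.Walk u w) {e : Sym2 V} (he : e ∈ p.edges) {v : V} (hv : v ∈ e) :
    v ∈ p.support := by
  induction e with
  | _ x y =>
    rcases Sym2.mem_iff.mp hv with rfl | rfl
    · exact p.fst_mem_support_of_mem_edges he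
    · exact p.snd_mem_support_of_mem_edges he

open scoped Classical in
/-- Edges of `G` lying inside a set inducing a tree are at most `|S| - 1`. -/
lemma aux_tree_edge_count {n : ℕ} (G : SimpleGraph (Fin n)) [DecidableRel G.Adj]
    {S : Set (Fin n)} (h : (G.induce S).IsTree) :
    (G.edgeFinset.filter (fun e => ∀ v ∈ e, v ∈ S)).card + 1 ≤ S.toFinset.card := by
  classical
  have hcard : ((G.induce S).edgeFinset).card + 1 = Fintype.card S :=
    h.card_edgeFinset
  have hle : (G.edgeFinset.filter (fun e => ∀ v ∈ e, v ∈ S)).card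
      ≤ ((G.induce S).edgeFinset).card := by
    apply Finset.card_le_card_of_surjOn (fun e => Sym2.map (Subtype.val) e)
    intro e he
    simp only [Finset.coe_filter, Set.mem_setOf_eq, Finset.mem_coe, mem_edgeFinset] at he
    obtain ⟨he1, he2⟩ := he
    induction e with
    | _ x y =>
      have hx : x ∈ S := he2 x (Sym2.mem_mk_left x y)
      have hy : y ∈ S := he2 y (Sym2.mem_mk_right x y)
      refine ⟨s(⟨x, hx⟩, ⟨y, hy⟩), ?_, rfl⟩
      simp only [Finset.mem_coe, mem_edgeFinset, mem_edgeSet]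
      exact he1
  have : Fintype.card S = S.toFinset.card := (Set.toFinset_card S).symm
  omega

/-- Construct a cycle through two distinct cross edges between two disjoint
induced trees. -/
lemma aux_cross_cycle {n : ℕ} (G : SimpleGraph (Fin n))
    {S₁ S₂ : Set (Fin n)} (h₁ : (G.induce S₁).IsTree) (h₂ : (G.induce S₂).IsTree)
    (hd : Disjoint S₁ S₂) {a₁ b₁ a₂ b₂ : Fin n}
    (ha₁ : a₁ ∈ S₁) (hb₁ : b₁ ∈ S₂) (ha₂ : a₂ ∈ S₁) (hb₂ : b₂ ∈ S₂)
    (he : G.Adj a₁ b₁) (hf : G.Adj a₂ b₂) (hne : s(a₁, b₁) ≠ s(a₂, b₂)) :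
    ∃ p : G.Walk a₁ a₁, p.IsCycle ∧ s(a₁, b₁) ∈ p.edges ∧ s(a₂, b₂) ∈ p.edges ∧
      ∀ e' ∈ p.edges, e' = s(a₁, b₁) ∨ e' = s(a₂, b₂) ∨
        (∀ v ∈ e', v ∈ S₁) ∨ (∀ v ∈ e', v ∈ S₂) := by
  classical
  -- path in the second tree from b₁ to b₂
  obtain ⟨w₂⟩ := h₂.isConnected ⟨b₁, hb₁⟩ ⟨b₂, hb₂⟩
  let p₂ : G.Walk b₁ b₂ := Walk.map (SimpleGraph.Embedding.induce S₂).toHom w₂.toPath.1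
  have hp₂ : p₂.IsPath :=
    Walk.map_isPath_of_injective (SimpleGraph.Embedding.induce (G := G) S₂).injective w₂.toPath.2
  have hs₂ : ∀ v ∈ p₂.support, v ∈ S₂ := by
    intro v hv
    simp only [p₂] at hv
    erw [Walk.support_map, List.mem_map] at hv
    obtain ⟨x, _, rfl⟩ := hv
    exact x.2
  -- path in the first tree from a₂ to a₁
  obtain ⟨w₁⟩ := h₁.isConnected ⟨a₂, ha₂⟩ ⟨a₁, ha₁⟩
  let p₁ : G.Walk a₂ a₁ := Walk.map (SimpleGraph.Embedding.induce S₁).toHom w₁.toPath.1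
  have hp₁ : p₁.IsPath :=
    Walk.map_isPath_of_injective (SimpleGraph.Embedding.induce (G := G) S₁).injective w₁.toPath.2
  have hs₁ : ∀ v ∈ p₁.support, v ∈ S₁ := by
    intro v hv
    simp only [p₁] at hv
    erw [Walk.support_map, List.mem_map] at hv
    obtain ⟨x, _, rfl⟩ := hv
    exact x.2
  -- assemble the cycle
  let q : G.Walk b₁ a₁ := p₂.append (Walk.cons hf.symm p₁)
  have hqsupp : q.support = p₂.support ++ p₁.support := by
    simp [q, Walk.support_append]
  have hqedges : q.edges = p₂.edges ++ (s(b₂, a₂) :: p₁.edges) := by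
    simp [q, Walk.edges_append]
  have hqpath : q.IsPath := by
    rw [Walk.isPath_def, hqsupp]
    refine List.Nodup.append (hp₂.support_nodup) (hp₁.support_nodup) ?_
    intro v hv2 hv1
    exact (Set.disjoint_left.mp hd) (hs₁ v hv1) (hs₂ v hv2)
  have hnotmem : s(a₁, b₁) ∉ q.edges := by
    rw [hqedges]
    intro hmem
    rcases List.mem_append.mp hmem with hmem | hmem
    · exact (Set.disjoint_left.mp hd) ha₁
        (hs₂ a₁ (p₂.fst_mem_support_of_mem_edges hmem))
    · rcases List.mem_cons.mp hmem with hmem | hmem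
      · exact hne (by rw [hmem, Sym2.eq_swap])
      · exact (Set.disjoint_left.mp hd)
          (hs₁ b₁ (p₁.snd_mem_support_of_mem_edges hmem)) hb₁
  refine ⟨Walk.cons he q, (Walk.cons_isCycle_iff q he).mpr ⟨hqpath, hnotmem⟩, ?_, ?_, ?_⟩
  · simp
  · rw [Walk.edges_cons, hqedges]
    right
    exact List.mem_append.mpr (Or.inr (List.mem_cons.mpr (Or.inl (Sym2.eq_swap).symm)))
  · intro e' he'
    rw [Walk.edges_cons, hqedges] at he'
    rcases List.mem_cons.mp he' with rfl | he'
    · exact Or.inl rfl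
    rcases List.mem_append.mp he' with hmem | hmem
    · exact Or.inr (Or.inr (Or.inr (fun v hv =>
        hs₂ v (aux_mem_support_of_mem_edges p₂ hmem hv))))
    rcases List.mem_cons.mp hmem with rfl | hmem
    · exact Or.inr (Or.inl (Sym2.eq_swap))
    · exact Or.inr (Or.inr (Or.inl (fun v hv =>
        hs₁ v (aux_mem_support_of_mem_edges p₁ hmem hv))))

/-- A cactus graph with at least two cycles (equivalently, connected with
`|E| ≥ |V| + 1`) has tree cover number at least 3. -/
theorem treeCoverNumber_ge_three_of_cactus {n : ℕ}
    (G : SimpleGraph (Fin n)) [DecidableRel G.Adj] (hG : IsCactus G)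
    (hE : n + 1 ≤ G.edgeFinset.card) :
    3 ≤ treeCoverNumber G := by
  classical
  -- the defining set is nonempty: cover by singletons
  have hne : { k : ℕ | ∃ 𝒯 : Finset (Set (Fin n)), 𝒯.card = k ∧
      (∀ S ∈ 𝒯, (G.induce S).IsTree) ∧
      (𝒯 : Set (Set (Fin n))).PairwiseDisjoint id ∧
      (∀ v : Fin n, ∃ S ∈ 𝒯, v ∈ S) }.Nonempty := by
    refine ⟨n, Finset.univ.image (fun v : Fin n => ({v} : Set (Fin n))), ?_, ?_, ?_, ?_⟩
    · rw [Finset.card_image_of_injective _ Set.singleton_injective, Finset.card_univ,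
        Fintype.card_fin]
    · intro S hS
      simp only [Finset.mem_image] at hS
      obtain ⟨v, _, rfl⟩ := hS
      exact aux_isTree_singleton G v
    · intro S hS T hT hST
      simp only [Finset.coe_image, Set.mem_image] at hS hT
      obtain ⟨v, _, rfl⟩ := hS
      obtain ⟨w, _, rfl⟩ := hT
      exact Set.disjoint_singleton.mpr (fun h => hST (by rw [h]))
    · intro v
      exact ⟨{v}, Finset.mem_image_of_mem _ (Finset.mem_univ v), rfl⟩
  refine le_csInf hne ?_
  rintro k ⟨𝒯, hcard, htree, hdisj, hcover⟩
  by_contra hlt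
  push_neg at hlt
  interval_cases k
  · -- no sets: but there is a vertex
    have h1 : 0 < G.edgeFinset.card := by omega
    obtain ⟨e, he⟩ := Finset.card_pos.mp h1
    obtain ⟨⟨u, v⟩, rfl⟩ := e.exists_rep
    obtain ⟨S, hS, _⟩ := hcover u
    rw [Finset.card_eq_zero.mp hcard] at hS
    exact absurd hS (Finset.notMem_empty S)
  · -- one tree covering everything
    obtain ⟨S, rfl⟩ := Finset.card_eq_one.mp hcard
    have hall : ∀ e ∈ G.edgeFinset, ∀ v ∈ e, v ∈ S := by
      intro e he v hv
      obtain ⟨T, hT, hvT⟩ := hcover v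
      rw [Finset.mem_singleton] at hT
      subst hT
      exact hvT
    have := aux_tree_edge_count G (htree S (Finset.mem_singleton_self S))
    have heq : G.edgeFinset.filter (fun e => ∀ v ∈ e, v ∈ S) = G.edgeFinset :=
      Finset.filter_true_of_mem hall
    rw [heq] at this
    have : S.toFinset.card ≤ n := by
      have := Finset.card_le_univ S.toFinset
      simpa using this
    omega
  · -- two trees
    obtain ⟨S₁, S₂, hSne, rfl⟩ := Finset.card_eq_two.mp hcard
    have h₁ : (G.induce S₁).IsTree := htree S₁ (by simp)
    have h₂ : (G.induce S₂).IsTree := htree S₂ (by simp)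
    have hd : Disjoint S₁ S₂ := by
      have := hdisj (by simp : S₁ ∈ (({S₁, S₂} : Finset (Set (Fin n))) : Set (Set (Fin n))))
        (by simp : S₂ ∈ (({S₁, S₂} : Finset (Set (Fin n))) : Set (Set (Fin n)))) hSne
      simpa [Function.onFun] using this
    have hcov : ∀ v : Fin n, v ∈ S₁ ∨ v ∈ S₂ := by
      intro v
      obtain ⟨T, hT, hvT⟩ := hcover v
      simp only [Finset.mem_insert, Finset.mem_singleton] at hT
      rcases hT with rfl | rfl
      · exact Or.inl hvT
      · exact Or.inr hvT
    -- counting: at least three cross edges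
    set P₁ : Sym2 (Fin n) → Prop := fun e => ∀ v ∈ e, v ∈ S₁ with hP₁
    set P₂ : Sym2 (Fin n) → Prop := fun e => ∀ v ∈ e, v ∈ S₂ with hP₂
    set cross := G.edgeFinset.filter (fun e => ¬ P₁ e ∧ ¬ P₂ e) with hcross
    have hsub : G.edgeFinset ⊆
        (G.edgeFinset.filter P₁ ∪ G.edgeFinset.filter P₂) ∪ cross := by
      intro e he
      simp only [Finset.mem_union, Finset.mem_filter, hcross]
      by_cases h1 : P₁ e
      · exact Or.inl (Or.inl ⟨he, h1⟩)
      by_cases h2 : P₂ e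
      · exact Or.inl (Or.inr ⟨he, h2⟩)
      · exact Or.inr ⟨he, h1, h2⟩
    have hcount : G.edgeFinset.card ≤
        (G.edgeFinset.filter P₁).card + (G.edgeFinset.filter P₂).card + cross.card := by
      calc G.edgeFinset.card
          ≤ ((G.edgeFinset.filter P₁ ∪ G.edgeFinset.filter P₂) ∪ cross).card :=
            Finset.card_le_card hsub
        _ ≤ (G.edgeFinset.filter P₁ ∪ G.edgeFinset.filter P₂).card + cross.card :=
            Finset.card_union_le _ _
        _ ≤ (G.edgeFinset.filter P₁).card + (G.edgeFinset.filter P₂).card + cross.card := by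
            have := Finset.card_union_le (G.edgeFinset.filter P₁) (G.edgeFinset.filter P₂)
            omega
    have hc1 := aux_tree_edge_count G h₁
    have hc2 := aux_tree_edge_count G h₂
    have hSn : S₁.toFinset.card + S₂.toFinset.card ≤ n := by
      have hdf : Disjoint S₁.toFinset S₂.toFinset := by
        rw [Set.disjoint_toFinset]
        exact hd
      rw [← Finset.card_union_of_disjoint hdf]
      have := Finset.card_le_univ (S₁.toFinset ∪ S₂.toFinset)
      simpa using this
    have hcross3 : 3 ≤ cross.card := by
      have e1 : (G.edgeFinset.filter P₁).card + 1 ≤ S₁.toFinset.card := by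
        convert hc1 using 3
      have e2 : (G.edgeFinset.filter P₂).card + 1 ≤ S₂.toFinset.card := by
        convert hc2 using 3
      omega
    -- pick three distinct cross edges
    obtain ⟨t, hts, ht3⟩ := Finset.exists_subset_card_eq hcross3
    obtain ⟨e₁, e₂, e₃, h12, h13, h23, rfl⟩ := Finset.card_eq_three.mp ht3
    have hcr : ∀ e ∈ cross, ∃ a b, a ∈ S₁ ∧ b ∈ S₂ ∧ G.Adj a b ∧ e = s(a, b) := by
      intro e he
      simp only [hcross, Finset.mem_filter, mem_edgeFinset] at he
      obtain ⟨hadj, hn1, hn2⟩ := he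
      induction e with
      | _ x y =>
        rw [mem_edgeSet] at hadj
        rcases hcov x with hx | hx
        · rcases hcov y with hy | hy
          · exact absurd (fun v hv => by
              rcases Sym2.mem_iff.mp hv with rfl | rfl
              · exact hx
              · exact hy) hn1
          · exact ⟨x, y, hx, hy, hadj, rfl⟩
        · rcases hcov y with hy | hy
          · exact ⟨y, x, hy, hx, hadj.symm, Sym2.eq_swap⟩
          · exact absurd (fun v hv => by
              rcases Sym2.mem_iff.mp hv with rfl | rfl
              · exact hx
              · exact hy) hn2
    obtain ⟨a₁, b₁, ha₁, hb₁, hadj₁, he₁⟩ := hcr e₁ (hts (by simp))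
    obtain ⟨a₂, b₂, ha₂, hb₂, hadj₂, he₂⟩ := hcr e₂ (hts (by simp))
    obtain ⟨a₃, b₃, ha₃, hb₃, hadj₃, he₃⟩ := hcr e₃ (hts (by simp))
    -- cycle p through e₂ and e₁, cycle q through e₂ and e₃
    obtain ⟨p, hp, hpe₂, hpe₁, _⟩ := aux_cross_cycle G h₁ h₂ hd ha₂ hb₂ ha₁ hb₁
      hadj₂ hadj₁ (by rw [← he₂, ← he₁]; exact h12.symm)
    obtain ⟨q, hq, hqe₂, hqe₃, hqclass⟩ := aux_cross_cycle G h₁ h₂ hd ha₂ hb₂ ha₃ hb₃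
      hadj₂ hadj₃ (by rw [← he₂, ← he₃]; exact h23)
    have hiff := hG.2 _ _ p q hp hq s(a₂, b₂) hpe₂ hqe₂ e₁
    have he₁q : e₁ ∈ q.edges := hiff.mp (he₁ ▸ hpe₁)
    rcases hqclass e₁ he₁q with h | h | h | h
    · exact h12 (by rw [h, ← he₂])
    · exact h13 (by rw [h, ← he₃])
    · -- e₁ has an endpoint in S₂, contradiction
      exact (Set.disjoint_left.mp hd) (h b₁ (by rw [he₁]; exact Sym2.mem_mk_right a₁ b₁)) hb₁
    · exact (Set.disjoint_left.mp hd) ha₁ (h a₁ (by rw [he₁]; exact Sym2.mem_mk_left a₁ b₁))
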